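/- Let R be a commutative ring, k an integer, and let (X,d), (X̂,d̂) be Q(k)-objects over R with leading parts e, ê. Let γ : ⊕_{i,j} X_{i,j} → ⊕_{i,j} X̂_{i,j} be an R-linear map with γ ∘ d_j = d̂_j ∘ γ for all j and γ(X_{i,j}) ⊆ ⊕_{l≥i} X̂_{l,j} for all i,j, and set δ_{i,j} := pr̂_{i,j} ∘ γ|_{X_{i,j}} : X_{i,j} → X̂_{i,j} (the maps δ form a chain map between the leading-part complexes). Assume: (1) there is s : ℤ → ℤ such that X_{l,j} = 0 and X̂_{l,j} = 0 whenever l ≥ −s(j); (2) for all i,j the map ker e_{i,j} / im e_{i−1,j−k} → ker ê_{i,j} / im ê_{i−1,j−k} induced by δ is an isomorphism of R-modules. Then for every j the map induced by γ from ker d_j / im d_{j−k} to ker d̂_j / im d̂_{j−k} is an isomorphism of R-modules. -/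

import Mathlib

open DirectSum

/-- The leading part `e_{i,j} := pr_{i+1,j+k} ∘ d_j ∘ incl_{i,j} : X_{i,j} → X_{i+1,j+k}`
of a `Q(k)`-object `(X, d)`. -/
noncomputable def leadingPart (R : Type*) [CommRing R] (k : ℤ)
    (X : ℤ → ℤ → Type*) [∀ i j, AddCommGroup (X i j)] [∀ i j, Module R (X i j)]
    (d : ∀ j : ℤ, (⨁ i, X i j) →ₗ[R] ⨁ i, X i (j + k)) (i j : ℤ) :
    X i j →ₗ[R] X (i + 1) (j + k) :=
  (DirectSum.component R ℤ (fun l => X l (j + k)) (i + 1)) ∘ₗ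
    (d j) ∘ₗ (DirectSum.lof R ℤ (fun l => X l j) i)

/-- The component `δ_{i,j} := pr̂_{i,j} ∘ γ ∘ incl_{i,j} : X_{i,j} → X̂_{i,j}`
of a morphism `γ` of `Q(k)`-objects. -/
noncomputable def diagPart (R : Type*) [CommRing R]
    (X Y : ℤ → ℤ → Type*) [∀ i j, AddCommGroup (X i j)] [∀ i j, Module R (X i j)]
    [∀ i j, AddCommGroup (Y i j)] [∀ i j, Module R (Y i j)]
    (γ : ∀ j : ℤ, (⨁ i, X i j) →ₗ[R] ⨁ i, Y i j) (i j : ℤ) :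
    X i j →ₗ[R] Y i j :=
  (DirectSum.component R ℤ (fun l => Y l j) i) ∘ₗ
    (γ j) ∘ₗ (DirectSum.lof R ℤ (fun l => X l j) i)

section helpers
variable {R : Type*} [CommRing R] {β β' : ℤ → Type*}
  [∀ i, AddCommGroup (β i)] [∀ i, Module R (β i)]
  [∀ i, AddCommGroup (β' i)] [∀ i, Module R (β' i)]

lemma vanish_low (f : (⨁ i, β i) →ₗ[R] ⨁ i, β' i) (c : ℤ)
    (hf : ∀ (i : ℤ) (u : β i) (l : ℤ), l < i + c → f (DirectSum.lof R ℤ β i u) l = 0)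
    (z : ⨁ i, β i) (t : ℤ) (hz : ∀ l, l < t → z l = 0)
    (m : ℤ) (hm : m < t + c) : f z m = 0 := by
  classical
  conv_lhs => rw [← DirectSum.sum_support_of z]
  rw [map_sum, DFinsupp.finset_sum_apply]
  apply Finset.sum_eq_zero
  intro i hi
  have hzi : z i ≠ 0 := DFinsupp.mem_support_iff.mp hi
  have hti : t ≤ i := by by_contra h; exact hzi (hz i (by omega))
  rw [← DirectSum.lof_eq_of R]
  exact hf i (z i) m (by omega)

lemma lead_low (f : (⨁ i, β i) →ₗ[R] ⨁ i, β' i) (c : ℤ)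
    (hf : ∀ (i : ℤ) (u : β i) (l : ℤ), l < i + c → f (DirectSum.lof R ℤ β i u) l = 0)
    (z : ⨁ i, β i) (t : ℤ) (hz : ∀ l, l < t → z l = 0)
    (m : ℤ) (hm : m = t + c) : f z m = f (DirectSum.lof R ℤ β t (z t)) m := by
  classical
  have hsplit : z = DirectSum.lof R ℤ β t (z t) + (z - DirectSum.lof R ℤ β t (z t)) := by abel
  have hw : ∀ l, l < t + 1 → (z - DirectSum.lof R ℤ β t (z t)) l = 0 := by
    intro l hl
    rcases eq_or_ne l t with rfl | hne
    · simp [DirectSum.sub_apply, DirectSum.lof_eq_of, DirectSum.of_eq_same]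
    · have h1 : z l = 0 := hz l (by omega)
      have h2 : (DirectSum.lof R ℤ β t (z t)) l = 0 := by
        rw [DirectSum.lof_eq_of]; exact DirectSum.of_eq_of_ne _ _ _ hne
      simp [DirectSum.sub_apply, h1, h2]
  conv_lhs => rw [hsplit]
  rw [map_add, DirectSum.add_apply,
    vanish_low f c hf _ (t + 1) hw m (by omega), add_zero]

lemma low_bound (z : ⨁ i, β i) : ∃ M : ℤ, ∀ l, l < M → z l = 0 := by
  classical
  by_cases h : z.support.Nonempty
  · refine ⟨z.support.min' h, fun l hl => ?_⟩
    by_contra hz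
    exact absurd (z.support.min'_le l (DFinsupp.mem_support_iff.mpr hz)) (by omega)
  · exact ⟨0, fun l _ => by
      rw [Finset.not_nonempty_iff_eq_empty] at h
      exact DFinsupp.ext_iff.mp (DFinsupp.support_eq_empty.mp h) l⟩

end helpers

lemma leadingPart_apply (R : Type*) [CommRing R] (k : ℤ)
    (X : ℤ → ℤ → Type*) [∀ i j, AddCommGroup (X i j)] [∀ i j, Module R (X i j)]
    (d : ∀ j : ℤ, (⨁ i, X i j) →ₗ[R] ⨁ i, X i (j + k)) (i j : ℤ) (u : X i j) :
    leadingPart R k X d i j u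
      = (d j (DirectSum.lof R ℤ (fun l => X l j) i u)) (i + 1) := rfl

lemma diagPart_apply (R : Type*) [CommRing R]
    (X Y : ℤ → ℤ → Type*) [∀ i j, AddCommGroup (X i j)] [∀ i j, Module R (X i j)]
    [∀ i j, AddCommGroup (Y i j)] [∀ i j, Module R (Y i j)]
    (γ : ∀ j : ℤ, (⨁ i, X i j) →ₗ[R] ⨁ i, Y i j) (i j : ℤ) (u : X i j) :
    diagPart R X Y γ i j u
      = (γ j (DirectSum.lof R ℤ (fun l => X l j) i u)) i := rfl

/-- Let `γ` be a morphism of `Q(k)`-objects `(X,d) → (X̂,d̂)` which are bounded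
(`X_{l,j} = X̂_{l,j} = 0` for `l ≥ −s(j)`).  If the maps `δ_{i,j}` induce isomorphisms on
the homology of the leading-part complexes (stated elementwise: the induced map
`ker e_{i+1,j+k}/im e_{i,j} → ker ê_{i+1,j+k}/im ê_{i,j}` is injective and surjective),
then `γ` induces isomorphisms `ker d_{j+k}/im d_j → ker d̂_{j+k}/im d̂_j` on the homology
of the total complexes (again stated elementwise). -/
theorem stmt_0 (R : Type*) [CommRing R] (k : ℤ)
    (X Xh : ℤ → ℤ → Type*) [∀ i j, AddCommGroup (X i j)] [∀ i j, Module R (X i j)]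
    [∀ i j, AddCommGroup (Xh i j)] [∀ i j, Module R (Xh i j)]
    (d : ∀ j : ℤ, (⨁ i, X i j) →ₗ[R] ⨁ i, X i (j + k))
    (dh : ∀ j : ℤ, (⨁ i, Xh i j) →ₗ[R] ⨁ i, Xh i (j + k))
    (hdd : ∀ j, d (j + k) ∘ₗ d j = 0)
    (hfilt : ∀ (j i : ℤ) (x : X i j) (l : ℤ), l ≤ i →
      (d j (DirectSum.lof R ℤ (fun l => X l j) i x)) l = 0)
    (hddh : ∀ j, dh (j + k) ∘ₗ dh j = 0)
    (hfilth : ∀ (j i : ℤ) (x : Xh i j) (l : ℤ), l ≤ i →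
      (dh j (DirectSum.lof R ℤ (fun l => Xh l j) i x)) l = 0)
    (γ : ∀ j : ℤ, (⨁ i, X i j) →ₗ[R] ⨁ i, Xh i j)
    (hγd : ∀ j, γ (j + k) ∘ₗ d j = dh j ∘ₗ γ j)
    (hγfilt : ∀ (j i : ℤ) (x : X i j) (l : ℤ), l < i →
      (γ j (DirectSum.lof R ℤ (fun l => X l j) i x)) l = 0)
    (hbound : ∃ s : ℤ → ℤ, ∀ l j : ℤ, -(s j) ≤ l →
      Subsingleton (X l j) ∧ Subsingleton (Xh l j))
    (hiso : ∀ i j : ℤ,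
      (∀ x : X (i + 1) (j + k), x ∈ LinearMap.ker (leadingPart R k X d (i + 1) (j + k)) →
        diagPart R X Xh γ (i + 1) (j + k) x ∈ LinearMap.range (leadingPart R k Xh dh i j) →
        x ∈ LinearMap.range (leadingPart R k X d i j)) ∧
      (∀ y : Xh (i + 1) (j + k), y ∈ LinearMap.ker (leadingPart R k Xh dh (i + 1) (j + k)) →
        ∃ x ∈ LinearMap.ker (leadingPart R k X d (i + 1) (j + k)),
          diagPart R X Xh γ (i + 1) (j + k) x - y
            ∈ LinearMap.range (leadingPart R k Xh dh i j))) :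
    ∀ j : ℤ,
      (∀ x, x ∈ LinearMap.ker (d (j + k)) → γ (j + k) x ∈ LinearMap.range (dh j) →
        x ∈ LinearMap.range (d j)) ∧
      (∀ y, y ∈ LinearMap.ker (dh (j + k)) →
        ∃ x ∈ LinearMap.ker (d (j + k)), γ (j + k) x - y ∈ LinearMap.range (dh j)) := by
  obtain ⟨s, hs⟩ := hbound
  -- the chain-map property of the diagonal parts: δ ∘ e = ê ∘ δ
  have hcomm : ∀ (i' j' : ℤ) (u : X i' j'),
      diagPart R X Xh γ (i' + 1) (j' + k) (leadingPart R k X d i' j' u)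
        = leadingPart R k Xh dh i' j' (diagPart R X Xh γ i' j' u) := by
    intro i' j' u
    have h1 : (γ (j' + k) (d j' (DirectSum.lof R ℤ (fun l => X l j') i' u))) (i' + 1)
        = (γ (j' + k) (DirectSum.lof R ℤ (fun l => X l (j' + k)) (i' + 1)
            ((d j' (DirectSum.lof R ℤ (fun l => X l j') i' u)) (i' + 1)))) (i' + 1) :=
      lead_low (γ (j' + k)) 0 (fun i u l hl => hγfilt (j' + k) i u l (by omega))
        _ (i' + 1) (fun l hl => hfilt j' i' u l (by omega)) (i' + 1) (by omega)
    have h2 : (dh j' (γ j' (DirectSum.lof R ℤ (fun l => X l j') i' u))) (i' + 1)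
        = (dh j' (DirectSum.lof R ℤ (fun l => Xh l j') i'
            ((γ j' (DirectSum.lof R ℤ (fun l => X l j') i' u)) i'))) (i' + 1) :=
      lead_low (dh j') 1 (fun i u l hl => hfilth j' i u l (by omega))
        _ i' (fun l hl => hγfilt j' i' u l (by omega)) (i' + 1) (by omega)
    have h3 : γ (j' + k) (d j' (DirectSum.lof R ℤ (fun l => X l j') i' u))
        = dh j' (γ j' (DirectSum.lof R ℤ (fun l => X l j') i' u)) :=
      LinearMap.congr_fun (hγd j') _
    calc diagPart R X Xh γ (i' + 1) (j' + k) (leadingPart R k X d i' j' u)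
        = (γ (j' + k) (d j' (DirectSum.lof R ℤ (fun l => X l j') i' u))) (i' + 1) := h1.symm
      _ = (dh j' (γ j' (DirectSum.lof R ℤ (fun l => X l j') i' u))) (i' + 1) := by rw [h3]
      _ = leadingPart R k Xh dh i' j' (diagPart R X Xh γ i' j' u) := h2
  -- the key acyclicity-of-the-cone lemma
  have key : ∀ (j : ℤ) (x : ⨁ i, X i (j + k + k)) (y : ⨁ i, Xh i (j + k)),
      d (j + k + k) x = 0 → γ (j + k + k) x + dh (j + k) y = 0 →
      ∃ (x' : ⨁ i, X i (j + k)) (y' : ⨁ i, Xh i j),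
        x + d (j + k) x' = 0 ∧ y = γ (j + k) x' + dh j y' := by
    intro j
    set N : ℤ := max (-(s (j + k + k))) (-(s (j + k))) with hN
    have main : ∀ (n : ℕ) (x : ⨁ i, X i (j + k + k)) (y : ⨁ i, Xh i (j + k)),
        d (j + k + k) x = 0 → γ (j + k + k) x + dh (j + k) y = 0 →
        (∀ l, l < N - n + 1 → x l = 0) → (∀ l, l < N - n → y l = 0) →
        ∃ (x' : ⨁ i, X i (j + k)) (y' : ⨁ i, Xh i j),
          x + d (j + k) x' = 0 ∧ y = γ (j + k) x' + dh j y' := by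
      intro n
      induction n with
      | zero =>
        intro x y _ _ hx hy
        have hx0 : x = 0 := by
          apply DFinsupp.ext; intro l
          rcases lt_or_ge l (N + 1) with h | h
          · simpa using hx l (by push_cast; omega)
          · have : Subsingleton (X l (j + k + k)) :=
              (hs l (j + k + k) (by have := le_max_left (-(s (j + k + k))) (-(s (j + k))); omega)).1
            exact Subsingleton.elim _ _
        have hy0 : y = 0 := by
          apply DFinsupp.ext; intro l
          rcases lt_or_ge l N with h | h
          · simpa using hy l (by push_cast; omega)
          · have : Subsingleton (Xh l (j + k)) :=
              (hs l (j + k) (by have := le_max_right (-(s (j + k + k))) (-(s (j + k))); omega)).2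
            exact Subsingleton.elim _ _
        exact ⟨0, 0, by simp [hx0], by simp [hy0]⟩
      | succ n ih =>
        intro x y hdx hxy hx hy
        set p : ℤ := N - n - 2 with hp
        have hx' : ∀ l, l < p + 1 + 1 → x l = 0 := fun l hl => hx l (by push_cast; omega)
        have hy' : ∀ l, l < p + 1 → y l = 0 := fun l hl => hy l (by push_cast; omega)
        set a : X (p + 1 + 1) (j + k + k) := x (p + 1 + 1) with hadef
        set b : Xh (p + 1) (j + k) := y (p + 1) with hbdef
        -- a is in the kernel of the leading part
        have ha : leadingPart R k X d (p + 1 + 1) (j + k + k) a = 0 := by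
          have h := lead_low (d (j + k + k)) 1
            (fun i u l hl => hfilt (j + k + k) i u l (by omega))
            x (p + 1 + 1) hx' (p + 1 + 1 + 1) (by omega)
          rw [hdx] at h
          simp only [DirectSum.zero_apply] at h
          rw [leadingPart_apply]
          exact h.symm
        -- the relation between the leading obstructions
        have hb : diagPart R X Xh γ (p + 1 + 1) (j + k + k) a
            + leadingPart R k Xh dh (p + 1) (j + k) b = 0 := by
          have h1 := lead_low (γ (j + k + k)) 0
            (fun i u l hl => hγfilt (j + k + k) i u l (by omega))
            x (p + 1 + 1) hx' (p + 1 + 1) (by omega)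
          have h2 := lead_low (dh (j + k)) 1
            (fun i u l hl => hfilth (j + k) i u l (by omega))
            y (p + 1) hy' (p + 1 + 1) (by omega)
          have h3 := congrArg (fun w => w (p + 1 + 1)) hxy
          simp only [DirectSum.add_apply, DirectSum.zero_apply] at h3
          rw [h1, h2] at h3
          rw [diagPart_apply, leadingPart_apply]
          exact h3
        -- apply the injectivity part of hiso
        obtain ⟨a₀, ha₀⟩ := (hiso (p + 1) (j + k)).1 a (LinearMap.mem_ker.mpr ha)
          ⟨-b, by rw [map_neg, eq_neg_of_add_eq_zero_right hb, neg_neg]⟩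
        -- apply the surjectivity part of hiso
        have hc : leadingPart R k Xh dh (p + 1) (j + k)
            (b + diagPart R X Xh γ (p + 1) (j + k) a₀) = 0 := by
          rw [map_add, ← hcomm (p + 1) (j + k) a₀, ha₀]
          exact (add_comm _ _).trans hb
        obtain ⟨u, hu1, v₀, hv₀⟩ := (hiso p j).2
          (b + diagPart R X Xh γ (p + 1) (j + k) a₀) (LinearMap.mem_ker.mpr hc)
        rw [LinearMap.mem_ker] at hu1
        -- the correction terms
        set a' : X (p + 1) (j + k) := u - a₀ with ha'def
        set b' : Xh p j := -v₀ with hb'def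
        have hlead_a' : leadingPart R k X d (p + 1) (j + k) a' = -a := by
          rw [ha'def, map_sub, hu1, ha₀, zero_sub]
        have hdiag_a' : diagPart R X Xh γ (p + 1) (j + k) a'
            = diagPart R X Xh γ (p + 1) (j + k) u - diagPart R X Xh γ (p + 1) (j + k) a₀ := by
          rw [ha'def, map_sub]
        have hlead_b' : leadingPart R k Xh dh p j b'
            = (b + diagPart R X Xh γ (p + 1) (j + k) a₀)
              - diagPart R X Xh γ (p + 1) (j + k) u := by
          rw [hb'def, map_neg, hv₀]; abel
        clear_value a' b'
        -- the corrected elements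
        set xt : ⨁ i, X i (j + k + k) :=
          x + d (j + k) (DirectSum.lof R ℤ (fun l => X l (j + k)) (p + 1) a') with hxt
        set yt : ⨁ i, Xh i (j + k) :=
          y - γ (j + k) (DirectSum.lof R ℤ (fun l => X l (j + k)) (p + 1) a')
            - dh j (DirectSum.lof R ℤ (fun l => Xh l j) p b') with hyt
        have hxtlow : ∀ l, l < N - n + 1 → xt l = 0 := by
          intro l hl
          rcases lt_or_ge l (p + 1 + 1) with h | h
          · rw [hxt]
            simp only [DirectSum.add_apply]
            rw [hx' l h, hfilt (j + k) (p + 1) a' l (by omega), add_zero]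
          · have hle : l = p + 1 + 1 := by omega
            subst hle
            rw [hxt]
            simp only [DirectSum.add_apply]
            have : (d (j + k) (DirectSum.lof R ℤ (fun l => X l (j + k)) (p + 1) a'))
                (p + 1 + 1) = -a := by rw [← leadingPart_apply]; exact hlead_a'
            rw [this, ← hadef, add_neg_cancel]
        have hytlow : ∀ l, l < N - n → yt l = 0 := by
          intro l hl
          rcases lt_or_ge l (p + 1) with h | h
          · rw [hyt]
            simp only [DirectSum.sub_apply]
            rw [hy' l h, hγfilt (j + k) (p + 1) a' l (by omega),
              hfilth j p b' l (by omega)]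
            abel
          · have hle : l = p + 1 := by omega
            subst hle
            rw [hyt]
            simp only [DirectSum.sub_apply]
            have h1 : (γ (j + k) (DirectSum.lof R ℤ (fun l => X l (j + k)) (p + 1) a'))
                (p + 1) = diagPart R X Xh γ (p + 1) (j + k) a' := by rw [diagPart_apply]
            have h2 : (dh j (DirectSum.lof R ℤ (fun l => Xh l j) p b')) (p + 1)
                = leadingPart R k Xh dh p j b' := by rw [leadingPart_apply]
            rw [h1, h2, hdiag_a', hlead_b', ← hbdef]
            abel
        have hdxt : d (j + k + k) xt = 0 := by
          rw [hxt, map_add, hdx, zero_add, ← LinearMap.comp_apply, hdd (j + k),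
            LinearMap.zero_apply]
        have hxyt : γ (j + k + k) xt + dh (j + k) yt = 0 := by
          have h1 : γ (j + k + k) (d (j + k) (DirectSum.lof R ℤ (fun l => X l (j + k)) (p + 1) a'))
              = dh (j + k) (γ (j + k) (DirectSum.lof R ℤ (fun l => X l (j + k)) (p + 1) a')) :=
            LinearMap.congr_fun (hγd (j + k)) _
          have h2 : dh (j + k) (dh j (DirectSum.lof R ℤ (fun l => Xh l j) p b')) = 0 := by
            rw [← LinearMap.comp_apply, hddh j, LinearMap.zero_apply]
          have expand : γ (j + k + k) xt + dh (j + k) yt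
              = (γ (j + k + k) x + dh (j + k) y)
                + (γ (j + k + k) (d (j + k) (DirectSum.lof R ℤ (fun l => X l (j + k)) (p + 1) a'))
                  - dh (j + k) (γ (j + k) (DirectSum.lof R ℤ (fun l => X l (j + k)) (p + 1) a')))
                - dh (j + k) (dh j (DirectSum.lof R ℤ (fun l => Xh l j) p b')) := by
            rw [hxt, hyt, map_add, map_sub, map_sub]
            abel
          rw [expand, hxy, h1, h2]
          abel
        obtain ⟨x'', y'', hx'', hy''⟩ := ih xt yt hdxt hxyt hxtlow hytlow
        refine ⟨DirectSum.lof R ℤ (fun l => X l (j + k)) (p + 1) a' + x'',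
          DirectSum.lof R ℤ (fun l => Xh l j) p b' + y'', ?_, ?_⟩
        · rw [map_add, ← add_assoc, ← hxt]
          exact hx''
        · rw [map_add, map_add]
          rw [hyt] at hy''
          have := hy''
          rw [sub_sub, sub_eq_iff_eq_add] at this
          rw [this]
          abel
    -- now deduce the key lemma for arbitrary elements
    intro x y hdx hxy
    obtain ⟨Mx, hMx⟩ := low_bound x
    obtain ⟨My, hMy⟩ := low_bound y
    set n : ℕ := ((N + 1 - Mx) ⊔ (N - My)).toNat with hn
    have h1 : N + 1 - Mx ≤ (N + 1 - Mx) ⊔ (N - My) := le_max_left _ _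
    have h2 : N - My ≤ (N + 1 - Mx) ⊔ (N - My) := le_max_right _ _
    have h3 : (N + 1 - Mx) ⊔ (N - My) ≤ (n : ℤ) := Int.self_le_toNat _
    exact main n x y hdx hxy (fun l hl => hMx l (by omega)) (fun l hl => hMy l (by omega))
  -- conclude
  intro j
  constructor
  · obtain ⟨j₀, rfl⟩ : ∃ j₀, j₀ + k = j := ⟨j - k, by ring⟩
    intro x hx hγx
    rw [LinearMap.mem_ker] at hx
    obtain ⟨z, hz⟩ := hγx
    obtain ⟨x', y', h1, h2⟩ := key j₀ x (-z) hx (by rw [map_neg, hz]; abel)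
    exact ⟨-x', by rw [map_neg]; exact neg_eq_of_add_eq_zero_left h1⟩
  · intro y hy
    rw [LinearMap.mem_ker] at hy
    obtain ⟨x', y', h1, h2⟩ := key j 0 y (map_zero _) (by rw [map_zero, zero_add]; exact hy)
    refine ⟨x', LinearMap.mem_ker.mpr (by simpa using h1), -y', ?_⟩
    rw [map_neg, h2]
    abel
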